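/- Let r ≥ 2 be an integer and let z₁,…,z_r be complex numbers with Re(z_k) > 0 for every k. Then the function t ↦ ∏_{k=1}^r (z_k + it)^{−1} is absolutely integrable on ℝ and ∫_ℝ ∏_{k=1}^r (z_k + it)^{−1} dt = 0. -/

import Mathlib

open MeasureTheory Set Filter Complex Finset
open scoped Topology Real

lemma auxG_integrable {c : ℝ} (hc : 0 < c) (b : ℝ) :
    Integrable (fun t : ℝ => (c ^ 2 + (b + t) ^ 2)⁻¹) := by
  have key : ∀ t : ℝ, (c ^ 2 + (b + t) ^ 2)⁻¹ = c⁻¹ * c⁻¹ * (1 + ((t + b) / c) ^ 2)⁻¹ := by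
    intro t; field_simp; ring
  simp_rw [key]
  exact ((integrable_inv_one_add_sq.comp_div hc.ne').comp_add_right b).const_mul _

lemma auxG_integral {c : ℝ} (hc : 0 < c) (b : ℝ) :
    ∫ t : ℝ, (c ^ 2 + (b + t) ^ 2)⁻¹ = π / c := by
  have key : ∀ t : ℝ, (c ^ 2 + (b + t) ^ 2)⁻¹ = c⁻¹ * c⁻¹ * (1 + ((t + b) / c) ^ 2)⁻¹ := by
    intro t; field_simp; ring
  simp_rw [key]
  rw [integral_const_mul, integral_add_right_eq_self (fun x : ℝ => (1 + (x / c) ^ 2)⁻¹) b,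
    MeasureTheory.Measure.integral_comp_div (fun x : ℝ => (1 + x ^ 2)⁻¹) c,
    integral_univ_inv_one_add_sq]
  rw [abs_of_pos hc, smul_eq_mul]
  field_simp

lemma aux_inv_le {p q : ℝ} (hp : 0 < p) (h : p ≤ q) : q⁻¹ ≤ p⁻¹ := by
  gcongr

lemma aux_pair {p q : ℝ} (hp : 0 < p) (hq : 0 < q) :
    p⁻¹ * q⁻¹ ≤ 1 / 2 * ((p ^ 2)⁻¹ + (q ^ 2)⁻¹) := by
  rw [div_mul_eq_mul_div, le_div_iff₀ (by norm_num : (0:ℝ) < 2), ← inv_pow, ← inv_pow]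
  nlinarith [sq_nonneg (p⁻¹ - q⁻¹)]

lemma aux_tendG (c e : ℝ) {l : Filter ℝ} (h : Tendsto (fun t : ℝ => |e + t|) l atTop) :
    Tendsto (fun t : ℝ => (c ^ 2 + (e + t) ^ 2)⁻¹) l (𝓝 0) := by
  apply Tendsto.inv_tendsto_atTop
  have h2 : Tendsto (fun t : ℝ => c ^ 2 + |e + t| ^ 2) l atTop :=
    tendsto_atTop_add_const_left _ _ ((tendsto_pow_atTop two_ne_zero).comp h)
  refine h2.congr fun t => by rw [_root_.sq_abs]

/-- For `r ≥ 2` and complex numbers `z₁, …, z_r` with positive real part,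
the function `t ↦ ∏ₖ (zₖ + it)⁻¹` is integrable on `ℝ` and its integral vanishes. -/
theorem stmt_6 (r : ℕ) (hr : 2 ≤ r) (z : Fin r → ℂ) (hz : ∀ k, 0 < (z k).re) :
    Integrable (fun t : ℝ => ∏ k, (z k + (t : ℂ) * Complex.I)⁻¹) ∧
      ∫ t : ℝ, ∏ k, (z k + (t : ℂ) * Complex.I)⁻¹ = 0 := by
  classical
  set i0 : Fin r := ⟨0, by omega⟩ with hi0
  set i1 : Fin r := ⟨1, by omega⟩ with hi1
  have hne : i1 ≠ i0 := by simp [hi0, hi1, Fin.ext_iff]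
  set a : Fin r → ℝ := fun k => (z k).re with ha
  set b : Fin r → ℝ := fun k => (z k).im with hb
  set w : ℝ → ℝ → Fin r → ℂ := fun x t k => z k + x + t * Complex.I with hw
  set F : ℝ → ℝ → ℂ := fun x t => ∏ k, (w x t k)⁻¹ with hF
  have hw_re : ∀ (x t : ℝ) (k : Fin r), (w x t k).re = a k + x := by
    intro x t k; simp [hw, ha]
  have hw_ne : ∀ {x : ℝ}, 0 ≤ x → ∀ (t : ℝ) (k : Fin r), w x t k ≠ 0 := by
    intro x hx t k h
    have h2 := hw_re x t k
    rw [h] at h2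
    simp only [Complex.zero_re] at h2
    have h3 : 0 < a k := by rw [ha]; exact hz k
    linarith
  have hw_normsq : ∀ (x t : ℝ) (k : Fin r), ‖w x t k‖ ^ 2 = (a k + x) ^ 2 + (b k + t) ^ 2 := by
    intro x t k
    rw [Complex.sq_norm, Complex.normSq_apply]
    simp only [hw, ha, hb, Complex.add_re, Complex.add_im, Complex.ofReal_re, Complex.ofReal_im,
      Complex.mul_re, Complex.mul_im, Complex.I_re, Complex.I_im]
    ring
  set s2 : Finset (Fin r) := (Finset.univ.erase i0).erase i1 with hs2
  set M : ℝ := (∏ k ∈ s2, (a k)⁻¹) / 2 with hM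
  have hM0 : 0 ≤ M := by
    rw [hM]
    have : 0 ≤ ∏ k ∈ s2, (a k)⁻¹ :=
      Finset.prod_nonneg fun k _ => inv_nonneg.2 (hz k).le
    linarith
  set B : ℝ → ℝ → ℝ := fun x t =>
    M * (((a i0 + x) ^ 2 + (b i0 + t) ^ 2)⁻¹ + ((a i1 + x) ^ 2 + (b i1 + t) ^ 2)⁻¹) with hB
  have hB0 : ∀ x t, 0 ≤ B x t := by
    intro x t
    apply mul_nonneg hM0
    positivity
  -- main pointwise bound
  have hFnorm : ∀ {x : ℝ}, 0 ≤ x → ∀ t, ‖F x t‖ ≤ B x t := by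
    intro x hx t
    have hmem1 : i1 ∈ Finset.univ.erase i0 := Finset.mem_erase.2 ⟨hne, Finset.mem_univ i1⟩
    have hsplit : ‖F x t‖ =
        ‖(w x t i0)⁻¹‖ * (‖(w x t i1)⁻¹‖ * ∏ k ∈ s2, ‖(w x t k)⁻¹‖) := by
      rw [hF]
      rw [norm_prod]
      rw [← Finset.mul_prod_erase Finset.univ _ (Finset.mem_univ i0),
        ← Finset.mul_prod_erase (Finset.univ.erase i0) _ hmem1]
    have hnorm_pos : ∀ k, 0 < ‖w x t k‖ := fun k => norm_pos_iff.2 (hw_ne hx t k)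
    have hrest : ∏ k ∈ s2, ‖(w x t k)⁻¹‖ ≤ ∏ k ∈ s2, (a k)⁻¹ := by
      refine Finset.prod_le_prod (fun k _ => norm_nonneg _) fun k _ => ?_
      rw [norm_inv]
      refine aux_inv_le (hz k) ?_
      calc a k ≤ a k + x := by linarith
        _ = (w x t k).re := (hw_re x t k).symm
        _ ≤ |(w x t k).re| := le_abs_self _
        _ ≤ ‖w x t k‖ := by exact Complex.abs_re_le_norm _
    have hpair : ‖(w x t i0)⁻¹‖ * ‖(w x t i1)⁻¹‖ ≤
        1 / 2 * (((a i0 + x) ^ 2 + (b i0 + t) ^ 2)⁻¹ + ((a i1 + x) ^ 2 + (b i1 + t) ^ 2)⁻¹) := by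
      rw [norm_inv, norm_inv, ← hw_normsq x t i0, ← hw_normsq x t i1]
      exact aux_pair (hnorm_pos i0) (hnorm_pos i1)
    calc ‖F x t‖ = ‖(w x t i0)⁻¹‖ * ‖(w x t i1)⁻¹‖ * ∏ k ∈ s2, ‖(w x t k)⁻¹‖ := by
          rw [hsplit]; ring
      _ ≤ (1 / 2 * (((a i0 + x) ^ 2 + (b i0 + t) ^ 2)⁻¹ + ((a i1 + x) ^ 2 + (b i1 + t) ^ 2)⁻¹)) *
            ∏ k ∈ s2, (a k)⁻¹ := by
          refine mul_le_mul hpair hrest (Finset.prod_nonneg fun k _ => norm_nonneg _) ?_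
          positivity
      _ = B x t := by rw [hB, hM]; ring
  have hapos : ∀ (k : Fin r), 0 < a k := by intro k; rw [ha]; exact hz k
  have hBmono : ∀ {x : ℝ}, 0 ≤ x → ∀ t, B x t ≤ B 0 t := by
    intro x hx t
    rw [hB]
    refine mul_le_mul_of_nonneg_left (add_le_add ?_ ?_) hM0 <;>
      refine aux_inv_le
        (by nlinarith [hapos i0, hapos i1, sq_nonneg (b i0 + t), sq_nonneg (b i1 + t)])
        (by nlinarith [hapos i0, hapos i1])
  have hBint : ∀ {x : ℝ}, 0 ≤ x → Integrable (B x) := by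
    intro x hx
    rw [hB]
    exact ((auxG_integrable (by nlinarith [hapos i0] : 0 < a i0 + x) (b i0)).add
      (auxG_integrable (by nlinarith [hapos i1] : 0 < a i1 + x) (b i1))).const_mul M
  have hBintegral : ∀ {x : ℝ}, 0 ≤ x →
      ∫ t : ℝ, B x t = M * (π / (a i0 + x) + π / (a i1 + x)) := by
    intro x hx
    rw [hB]
    rw [MeasureTheory.integral_const_mul,
      integral_add (auxG_integrable (by nlinarith [hapos i0] : 0 < a i0 + x) (b i0))
        (auxG_integrable (by nlinarith [hapos i1] : 0 < a i1 + x) (b i1)),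
      auxG_integral (by nlinarith [hapos i0] : 0 < a i0 + x) (b i0),
      auxG_integral (by nlinarith [hapos i1] : 0 < a i1 + x) (b i1)]
  have hFcont : ∀ {x : ℝ}, 0 ≤ x → Continuous (F x) := by
    intro x hx
    rw [hF]
    refine continuous_finset_prod _ fun k _ => Continuous.inv₀ ?_ (fun t => hw_ne hx t k)
    rw [hw]
    fun_prop
  have hFint : ∀ {x : ℝ}, 0 ≤ x → Integrable (F x) := by
    intro x hx
    exact (hBint le_rfl).mono' (hFcont hx).aestronglyMeasurable
      (ae_of_all _ fun t => (hFnorm hx t).trans (hBmono hx t))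
  set S : ℝ := ∑ k, (a k)⁻¹ with hS
  set D : ℝ → ℝ → ℂ := fun x t => -(F x t * ∑ k, (w x t k)⁻¹) with hD
  have hDsum : ∀ {x : ℝ}, 0 ≤ x → ∀ (t : ℝ) (c : ℂ),
      ∑ k : Fin r, (∏ j ∈ Finset.univ.erase k, (w x t j)⁻¹) • (-c / (w x t k) ^ 2)
        = c * D x t := by
    intro x hx t c
    rw [hD, mul_neg, Finset.mul_sum, Finset.mul_sum, ← Finset.sum_neg_distrib]
    refine Finset.sum_congr rfl fun k _ => ?_
    have hk := hw_ne hx t k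
    simp only [smul_eq_mul, hF]
    rw [← Finset.mul_prod_erase Finset.univ _ (Finset.mem_univ k), div_eq_mul_inv, ← inv_pow]
    ring
  have hDx : ∀ {x : ℝ}, 0 ≤ x → ∀ t, HasDerivAt (fun y : ℝ => F y t) (D x t) x := by
    intro x hx t
    have h1 : ∀ k ∈ Finset.univ, HasDerivAt (fun y : ℝ => (w y t k)⁻¹)
        (-1 / (w x t k) ^ 2) x := by
      intro k _
      have hb : HasDerivAt (fun y : ℝ => (y : ℂ)) 1 x := by
        simpa using (hasDerivAt_id x).ofReal_comp
      have hlin : HasDerivAt (fun y : ℝ => z k + y + t * Complex.I) 1 x := by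
        simpa using (hb.const_add (z k)).add_const ((t : ℂ) * Complex.I)
      have hne0 : z k + (x : ℂ) + (t : ℂ) * Complex.I ≠ 0 := by
        simpa [hw] using hw_ne hx t k
      have h2 := (hasDerivAt_const x (1 : ℂ)).div hlin hne0
      simpa [hw, one_div, Pi.div_def] using h2
    have h2 := HasDerivAt.fun_finsetProd h1
    have h3 := hDsum hx t 1
    simp only [one_mul] at h3
    rw [← h3]
    exact h2
  have hDt : ∀ {x : ℝ}, 0 ≤ x → ∀ t,
      HasDerivAt (fun s : ℝ => F x s) (Complex.I * D x t) t := by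
    intro x hx t
    have h1 : ∀ k ∈ Finset.univ, HasDerivAt (fun s : ℝ => (w x s k)⁻¹)
        (-Complex.I / (w x t k) ^ 2) t := by
      intro k _
      have hb : HasDerivAt (fun s : ℝ => (s : ℂ) * Complex.I) Complex.I t := by
        simpa using (Complex.ofRealCLM.hasDerivAt (x := t)).mul_const Complex.I
      have hlin : HasDerivAt (fun s : ℝ => z k + x + s * Complex.I) Complex.I t := by
        simpa using hb.const_add (z k + (x : ℂ))
      have hne0 : z k + (x : ℂ) + (t : ℂ) * Complex.I ≠ 0 := by
        simpa [hw] using hw_ne hx t k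
      have h2 := (hasDerivAt_const t (1 : ℂ)).div hlin hne0
      simpa [hw, one_div, Pi.div_def] using h2
    have h2 := HasDerivAt.fun_finsetProd h1
    rw [← hDsum hx t Complex.I]
    exact h2
  have hDnorm : ∀ {x : ℝ}, 0 ≤ x → ∀ t, ‖D x t‖ ≤ S * B 0 t := by
    intro x hx t
    rw [hD, norm_neg, norm_mul]
    have h1 : ‖∑ k : Fin r, (w x t k)⁻¹‖ ≤ S := by
      refine (norm_sum_le _ _).trans ?_
      rw [hS]
      refine Finset.sum_le_sum fun k _ => ?_
      rw [norm_inv]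
      refine aux_inv_le (hapos k) ?_
      calc a k ≤ a k + x := by linarith
        _ = (w x t k).re := (hw_re x t k).symm
        _ ≤ |(w x t k).re| := le_abs_self _
        _ ≤ ‖w x t k‖ := by exact Complex.abs_re_le_norm _
    calc ‖F x t‖ * ‖∑ k : Fin r, (w x t k)⁻¹‖ ≤ B 0 t * S :=
        mul_le_mul ((hFnorm hx t).trans (hBmono hx t)) h1 (norm_nonneg _) (hB0 0 t)
      _ = S * B 0 t := mul_comm _ _
  have hDcont : ∀ {x : ℝ}, 0 ≤ x → Continuous (D x) := by
    intro x hx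
    rw [hD]
    refine ((hFcont hx).mul (continuous_finset_sum _ fun k _ => Continuous.inv₀ ?_
      (fun t => hw_ne hx t k))).neg
    rw [hw]; fun_prop
  have hDint : ∀ {x : ℝ}, 0 ≤ x → Integrable (D x) := by
    intro x hx
    exact ((hBint le_rfl).const_mul S).mono' (hDcont hx).aestronglyMeasurable
      (ae_of_all _ fun t => hDnorm hx t)
  -- limits of F x at ±∞ (in t)
  have hFtend : ∀ {x : ℝ}, 0 ≤ x → ∀ {l : Filter ℝ},
      (∀ e : ℝ, Tendsto (fun t : ℝ => |e + t|) l atTop) →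
      Tendsto (fun t => F x t) l (𝓝 0) := by
    intro x hx l hl
    refine squeeze_zero_norm (fun t => hFnorm hx t) ?_
    have h1 := ((aux_tendG (a i0 + x) (b i0) (hl (b i0))).add
      (aux_tendG (a i1 + x) (b i1) (hl (b i1)))).const_mul M
    rw [add_zero, mul_zero] at h1
    exact h1.congr fun t => by rw [hB]
  have habs_top : ∀ e : ℝ, Tendsto (fun t : ℝ => |e + t|) atTop atTop := fun e =>
    tendsto_abs_atTop_atTop.comp (tendsto_atTop_add_const_left _ e tendsto_id)
  have habs_bot : ∀ e : ℝ, Tendsto (fun t : ℝ => |e + t|) atBot atTop := fun e =>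
    tendsto_abs_atBot_atTop.comp (tendsto_atBot_add_const_left _ e tendsto_id)
  -- the integral of D x vanishes
  have hDeq0 : ∀ {x : ℝ}, 0 ≤ x → ∫ t : ℝ, D x t = 0 := by
    intro x hx
    have hint : Integrable (fun t : ℝ => Complex.I * D x t) := (hDint hx).const_mul _
    have h1 : ∫ t in Ioi (0:ℝ), Complex.I * D x t = 0 - F x 0 :=
      integral_Ioi_of_hasDerivAt_of_tendsto' (fun t _ => hDt hx t)
        hint.integrableOn (hFtend hx habs_top)
    have h2 : ∫ t in Iic (0:ℝ), Complex.I * D x t = F x 0 - 0 :=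
      integral_Iic_of_hasDerivAt_of_tendsto' (fun t _ => hDt hx t)
        hint.integrableOn (hFtend hx habs_bot)
    have h3 : ∫ t : ℝ, Complex.I * D x t = 0 := by
      rw [← intervalIntegral.integral_Iic_add_Ioi hint.integrableOn hint.integrableOn, h1, h2]
      ring
    rw [MeasureTheory.integral_const_mul] at h3
    exact (mul_eq_zero.1 h3).resolve_left Complex.I_ne_zero
  set Ifun : ℝ → ℂ := fun x => ∫ t : ℝ, F x t with hIfun
  -- Ifun has zero derivative on positive reals
  have hI' : ∀ {x : ℝ}, 0 < x → HasDerivAt Ifun 0 x := by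
    intro x hx
    have hball : ∀ y ∈ Metric.ball x x, (0:ℝ) ≤ y := by
      intro y hy
      rw [Metric.mem_ball, Real.dist_eq] at hy
      have := abs_lt.1 hy
      linarith [this.1]
    have h := hasDerivAt_integral_of_dominated_loc_of_deriv_le (F := fun y t => F y t)
      (F' := fun y t => D y t) (bound := fun t => S * B 0 t) (Metric.ball_mem_nhds x hx)
      (eventually_of_mem (Ioi_mem_nhds hx) fun y hy =>
        (hFcont (le_of_lt hy)).aestronglyMeasurable)
      (hFint hx.le)
      ((hDcont hx.le).aestronglyMeasurable)
      (ae_of_all _ fun t y hy => hDnorm (hball y hy) t)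
      ((hBint le_rfl).const_mul S)
      (ae_of_all _ fun t y hy => hDx (hball y hy) t)
    have h2 := h.2
    rw [hDeq0 hx.le] at h2
    exact h2
  -- Ifun is constant on positive reals
  have hconst : ∀ {u : ℝ}, 0 < u → Ifun u = Ifun 1 := by
    intro u hu
    have h := intervalIntegral.integral_eq_sub_of_hasDerivAt
      (f := Ifun) (f' := fun _ => (0 : ℂ)) (a := u) (b := 1)
      (fun y hy => by
        refine hI' ?_
        rcases Set.mem_uIcc.1 hy with ⟨h1, _⟩ | ⟨h1, _⟩ <;> linarith)
      intervalIntegrable_const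
    simp only [intervalIntegral.integral_const, smul_zero] at h
    exact (sub_eq_zero.1 h.symm).symm
  -- Ifun tends to 0 at +∞
  have htends : Tendsto Ifun atTop (𝓝 0) := by
    have hb : Tendsto (fun x : ℝ => M * (π / (a i0 + x) + π / (a i1 + x))) atTop (𝓝 0) := by
      have h0 : Tendsto (fun x : ℝ => π / (a i0 + x)) atTop (𝓝 0) :=
        tendsto_const_nhds.div_atTop (tendsto_atTop_add_const_left _ _ tendsto_id)
      have h1 : Tendsto (fun x : ℝ => π / (a i1 + x)) atTop (𝓝 0) :=
        tendsto_const_nhds.div_atTop (tendsto_atTop_add_const_left _ _ tendsto_id)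
      have := (h0.add h1).const_mul M
      simpa using this
    refine squeeze_zero_norm' ?_ hb
    filter_upwards [eventually_ge_atTop (0:ℝ)] with x hx
    calc ‖Ifun x‖ ≤ ∫ t : ℝ, B x t :=
        norm_integral_le_of_norm_le (hBint hx) (ae_of_all _ fun t => hFnorm hx t)
      _ = M * (π / (a i0 + x) + π / (a i1 + x)) := hBintegral hx
  have hI1 : Ifun 1 = 0 := by
    refine tendsto_nhds_unique ?_ htends
    refine tendsto_const_nhds.congr' ?_
    filter_upwards [eventually_gt_atTop (0:ℝ)] with x hx
    exact (hconst hx).symm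
  have hIpos : ∀ {u : ℝ}, 0 < u → Ifun u = 0 := fun hu => (hconst hu).trans hI1
  -- continuity at 0 via dominated convergence along the sequence 1/(n+1)
  have hI0 : Ifun 0 = 0 := by
    have hpos : ∀ n : ℕ, (0:ℝ) < 1 / ((n : ℝ) + 1) := fun n => by positivity
    have hseq : Tendsto (fun n : ℕ => 1 / ((n : ℝ) + 1)) atTop (𝓝 0) :=
      tendsto_one_div_add_atTop_nhds_zero_nat
    have hDC := MeasureTheory.tendsto_integral_of_dominated_convergence
      (F := fun (n : ℕ) (t : ℝ) => F (1 / ((n : ℝ) + 1)) t) (f := F 0) (bound := B 0)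
      (fun n => (hFcont (hpos n).le).aestronglyMeasurable)
      (hBint le_rfl)
      (fun n => ae_of_all _ fun t => (hFnorm (hpos n).le t).trans (hBmono (hpos n).le t))
      (ae_of_all _ fun t => ((hDx le_rfl t).continuousAt.tendsto).comp hseq)
    have hzero : (fun n : ℕ => ∫ t : ℝ, F (1 / ((n : ℝ) + 1)) t) = fun _ => (0 : ℂ) :=
      funext fun n => hIpos (hpos n)
    rw [hzero] at hDC
    exact (tendsto_nhds_unique tendsto_const_nhds hDC).symm
  have hFeq : F 0 = fun t : ℝ => ∏ k, (z k + (t : ℂ) * Complex.I)⁻¹ := by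
    funext t
    rw [hF, hw]
    simp
  constructor
  · rw [← hFeq]; exact hFint le_rfl
  · have h := hI0
    simp only [hIfun] at h
    rw [hFeq] at h
    exact h
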